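/- arXiv:2006.04379 — 2 statements merged into one kernel-verified Lean document; each statement's English description precedes it below -/
import Mathlib

section
/- The eigenfunctions ψ_n(x) = (2ⁿ n!)^{-1/2} (mω/π)^{1/4} e^{-mωx²/2} H_n(√(mω) x) of the 1D harmonic oscillator form an orthonormal family in L²(ℝ): ∫_ℝ ψ_m(x) ψ_n(x) dx = δ_{mn}. -/
open MeasureTheory Real

/-- Physicists' Hermite polynomials `H_n(z) = (-1)^n e^{z²} (d/dz)^n e^{-z²}`. -/
noncomputable def hermitePhys (n : ℕ) (z : ℝ) : ℝ :=
  (-1) ^ n * Real.exp (z ^ 2) * (deriv^[n] fun t : ℝ => Real.exp (-t ^ 2)) z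

/-- The `n`-th eigenfunction of the 1D harmonic oscillator. -/
noncomputable def oscillatorEigenfunction (m ω : ℝ) (n : ℕ) (x : ℝ) : ℝ :=
  (Real.sqrt (2 ^ n * n.factorial))⁻¹ * (m * ω / Real.pi) ^ ((1 : ℝ) / 4) *
    Real.exp (-(m * ω * x ^ 2) / 2) * hermitePhys n (Real.sqrt (m * ω) * x)

open Polynomial in
/-- The probabilists' Hermite polynomial over `ℝ`. -/
noncomputable def Hr (n : ℕ) : Polynomial ℝ := (Polynomial.hermite n).map (Int.castRingHom ℝ)

open Polynomial

lemma aeval_eq_Hr (n : ℕ) (x : ℝ) : Polynomial.aeval x (Polynomial.hermite n) = (Hr n).eval x := by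
  rw [Hr, Polynomial.eval_map, Polynomial.aeval_def]; rfl

lemma natDegree_Hr (n : ℕ) : (Hr n).natDegree = n := by
  rw [Hr, Polynomial.natDegree_map_eq_iff.mpr] <;>
  simp [Polynomial.natDegree_hermite, Polynomial.coeff_hermite_self]

lemma iterate_derivative_Hr_self (n : ℕ) : derivative^[n] (Hr n) = C ((n.factorial : ℝ)) := by
  have h1 : (derivative^[n] (Hr n)).natDegree = 0 := by
    have := Polynomial.natDegree_iterate_derivative (Hr n) n
    simpa [natDegree_Hr] using this
  rw [Polynomial.eq_C_of_natDegree_eq_zero h1, Polynomial.coeff_iterate_derivative]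
  simp [Hr, Polynomial.coeff_hermite_self, Nat.descFactorial_self]

lemma iterate_derivative_Hr_zero {a b : ℕ} (h : a < b) : derivative^[b] (Hr a) = 0 :=
  Polynomial.iterate_derivative_eq_zero (by rwa [natDegree_Hr])

lemma integrable_pow_gaussian (k : ℕ) : Integrable fun x : ℝ => x ^ k * Real.exp (-(x^2/2)) := by
  have h := integrable_rpow_mul_exp_neg_mul_sq (b := (1/2:ℝ)) (by norm_num) (s := (k:ℝ))
    (by exact_mod_cast neg_one_lt_zero.trans_le (Nat.cast_nonneg k))
  have e : (fun x : ℝ => x ^ ((k:ℝ)) * Real.exp (-(1/2:ℝ) * x^2))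
      = fun x : ℝ => x ^ k * Real.exp (-(x^2/2)) := by
    funext x; rw [Real.rpow_natCast]; ring_nf
  rwa [e] at h

lemma integrable_poly_gaussian (p : Polynomial ℝ) :
    Integrable fun x : ℝ => p.eval x * Real.exp (-(x^2/2)) := by
  have e : (fun x : ℝ => p.eval x * Real.exp (-(x^2/2)))
      = fun x : ℝ => ∑ k ∈ Finset.range (p.natDegree + 1),
          p.coeff k * (x ^ k * Real.exp (-(x^2/2))) := by
    funext x
    rw [Polynomial.eval_eq_sum_range, Finset.sum_mul]
    simp [mul_assoc]
  rw [e]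
  exact integrable_finset_sum _ fun k _ => (integrable_pow_gaussian k).const_mul _

lemma G_eq (n : ℕ) : deriv^[n] (fun y : ℝ => Real.exp (-(y^2/2)))
    = fun x : ℝ => (-1:ℝ)^n * (Hr n).eval x * Real.exp (-(x^2/2)) := by
  funext x
  have := Polynomial.deriv_gaussian_eq_hermite_mul_gaussian n x
  rw [aeval_eq_Hr] at this
  simpa using this

lemma hasDerivAt_G (n : ℕ) (x : ℝ) :
    HasDerivAt (deriv^[n] fun y : ℝ => Real.exp (-(y^2/2)))
      (deriv^[n+1] (fun y : ℝ => Real.exp (-(y^2/2))) x) x := by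
  have hd : Differentiable ℝ (deriv^[n] fun y : ℝ => Real.exp (-(y^2/2))) := by
    rw [G_eq]
    exact (((Hr n).differentiable.const_mul _).mul (by fun_prop))
  have h := (hd x).hasDerivAt
  rwa [show deriv^[n+1] (fun y : ℝ => Real.exp (-(y^2/2))) x
      = deriv (deriv^[n] fun y : ℝ => Real.exp (-(y^2/2))) x from by
    rw [Function.iterate_succ_apply']]

lemma integrable_poly_G (p : Polynomial ℝ) (n : ℕ) :
    Integrable fun x : ℝ => p.eval x * deriv^[n] (fun y : ℝ => Real.exp (-(y^2/2))) x := by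
  rw [G_eq]
  have e : (fun x : ℝ => p.eval x * ((-1:ℝ)^n * (Hr n).eval x * Real.exp (-(x^2/2))))
      = fun x : ℝ => (-1:ℝ)^n * ((p * Hr n).eval x * Real.exp (-(x^2/2))) := by
    funext x; simp [Polynomial.eval_mul]; ring
  rw [e]
  exact (integrable_poly_gaussian _).const_mul _

lemma ibp_step (p : Polynomial ℝ) (n : ℕ) :
    ∫ x : ℝ, p.eval x * deriv^[n+1] (fun y : ℝ => Real.exp (-(y^2/2))) x
      = - ∫ x : ℝ, (derivative p).eval x * deriv^[n] (fun y : ℝ => Real.exp (-(y^2/2))) x := by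
  exact integral_mul_deriv_eq_deriv_mul_of_integrable
    (fun x _ => p.hasDerivAt x) (fun x _ => hasDerivAt_G n x)
    (integrable_poly_G p (n+1)) (integrable_poly_G (derivative p) n)
    (integrable_poly_G p n)

lemma key_integral (n : ℕ) (p : Polynomial ℝ) :
    ∫ x : ℝ, p.eval x * deriv^[n] (fun y : ℝ => Real.exp (-(y^2/2))) x
      = (-1:ℝ)^n * ∫ x : ℝ, (derivative^[n] p).eval x * Real.exp (-(x^2/2)) := by
  induction n generalizing p with
  | zero => simp
  | succ n ih =>
      rw [ibp_step p n, ih (derivative p), ← Function.iterate_succ_apply]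
      ring

lemma gaussian_int : ∫ x : ℝ, Real.exp (-(x^2/2)) = Real.sqrt (2*π) := by
  have h := integral_gaussian (1/2)
  have e : (fun x : ℝ => Real.exp (-(1/2:ℝ) * x^2)) = fun x : ℝ => Real.exp (-(x^2/2)) := by
    funext x; ring_nf
  rw [e] at h
  rw [h]; congr 1; ring

lemma hermite_orth_le {a b : ℕ} (hab : a ≤ b) :
    ∫ x : ℝ, (Hr a).eval x * (Hr b).eval x * Real.exp (-(x^2/2))
      = if a = b then (a.factorial : ℝ) * Real.sqrt (2*π) else 0 := by
  have e : (fun x : ℝ => (Hr a).eval x * (Hr b).eval x * Real.exp (-(x^2/2)))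
      = fun x : ℝ => (-1:ℝ)^b *
          ((Hr a).eval x * deriv^[b] (fun y : ℝ => Real.exp (-(y^2/2))) x) := by
    funext x; rw [G_eq]
    have : ((-1:ℝ))^b * (-1:ℝ)^b = 1 := by
      rw [← pow_add]; exact Even.neg_one_pow ⟨b, rfl⟩
    calc eval x (Hr a) * eval x (Hr b) * Real.exp (-(x^2/2))
        = ((-1:ℝ)^b * (-1:ℝ)^b) * (eval x (Hr a) * eval x (Hr b) * Real.exp (-(x^2/2))) := by
          rw [this, one_mul]
      _ = (-1:ℝ)^b * (eval x (Hr a) *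
            ((-1:ℝ)^b * eval x (Hr b) * Real.exp (-(x^2/2)))) := by ring
  rw [e, MeasureTheory.integral_const_mul, key_integral, ← mul_assoc, ← pow_add,
    Even.neg_one_pow ⟨b, rfl⟩, one_mul]
  rcases eq_or_lt_of_le hab with rfl | hlt
  · rw [iterate_derivative_Hr_self, if_pos rfl]
    simp [MeasureTheory.integral_const_mul, gaussian_int]
  · rw [iterate_derivative_Hr_zero hlt, if_neg hlt.ne]
    simp

lemma hermite_orth (a b : ℕ) :
    ∫ x : ℝ, (Hr a).eval x * (Hr b).eval x * Real.exp (-(x^2/2))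
      = if a = b then (a.factorial : ℝ) * Real.sqrt (2*π) else 0 := by
  rcases le_total a b with h | h
  · exact hermite_orth_le h
  · have := hermite_orth_le h
    simp only [mul_comm ((Hr b).eval _) ((Hr a).eval _)] at this
    rw [this]
    rcases eq_or_ne a b with rfl | hne
    · simp
    · rw [if_neg hne, if_neg (Ne.symm hne)]

lemma hermitePhys_eq (n : ℕ) (z : ℝ) :
    hermitePhys n z = (Real.sqrt 2) ^ n * (Hr n).eval (Real.sqrt 2 * z) := by
  have hcd : ContDiff ℝ (n : ℕ∞) fun y : ℝ => Real.exp (-(y^2/2)) := by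
    apply Real.contDiff_exp.comp
    exact (((contDiff_id.pow 2).div_const 2).neg)
  have hcomp : (fun t : ℝ => Real.exp (-t ^ 2))
      = fun t : ℝ => (fun y : ℝ => Real.exp (-(y^2/2))) (Real.sqrt 2 * t) := by
    funext t
    congr 1
    rw [mul_pow, sq_sqrt (by norm_num : (0:ℝ) ≤ 2)]
    ring
  have hiter : deriv^[n] (fun t : ℝ => Real.exp (-t ^ 2)) z
      = (Real.sqrt 2) ^ n * deriv^[n] (fun y : ℝ => Real.exp (-(y^2/2))) (Real.sqrt 2 * z) := by
    rw [hcomp, ← iteratedDeriv_eq_iterate, ← iteratedDeriv_eq_iterate,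
      iteratedDeriv_comp_const_mul (f := fun y : ℝ => Real.exp (-(y^2/2))) (by exact_mod_cast hcd)]
  rw [hermitePhys, hiter, G_eq]
  have h2 : Real.exp (z ^ 2) * Real.exp (-((Real.sqrt 2 * z) ^ 2 / 2)) = 1 := by
    rw [← Real.exp_add, mul_pow, sq_sqrt (by norm_num : (0:ℝ) ≤ 2)]
    rw [show z^2 + -(2 * z ^ 2/2) = 0 by ring, Real.exp_zero]
  have hsq : ((-1:ℝ))^n * (-1:ℝ)^n = 1 := by
    rw [← pow_add]; exact Even.neg_one_pow ⟨n, rfl⟩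
  calc (-1:ℝ) ^ n * Real.exp (z ^ 2) *
        ((Real.sqrt 2) ^ n * ((-1:ℝ)^n * (Hr n).eval (Real.sqrt 2 * z) *
          Real.exp (-((Real.sqrt 2 * z)^2/2))))
      = ((-1:ℝ)^n * (-1:ℝ)^n) * (Real.exp (z ^ 2) * Real.exp (-((Real.sqrt 2 * z) ^ 2 / 2))) *
        ((Real.sqrt 2) ^ n * (Hr n).eval (Real.sqrt 2 * z)) := by ring
    _ = (Real.sqrt 2) ^ n * (Hr n).eval (Real.sqrt 2 * z) := by rw [h2, hsq]; ring

theorem harmonic_oscillator_orthonormal (m ω : ℝ) (hm : 0 < m) (hω : 0 < ω)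
    (a b : ℕ) :
    ∫ x : ℝ, oscillatorEigenfunction m ω a x * oscillatorEigenfunction m ω b x
      = if a = b then 1 else 0 := by
  have hmω : 0 < m * ω := mul_pos hm hω
  set c : ℝ := Real.sqrt (m * ω) with hc_def
  have hc : 0 < c := Real.sqrt_pos.mpr hmω
  set s : ℝ := Real.sqrt 2 * c with hs_def
  have hs : 0 < s := mul_pos (Real.sqrt_pos.mpr (by norm_num)) hc
  set K : ℝ := (Real.sqrt (2 ^ a * a.factorial))⁻¹ * (Real.sqrt (2 ^ b * b.factorial))⁻¹ *
      ((m * ω / Real.pi) ^ ((1 : ℝ) / 4)) ^ 2 * (Real.sqrt 2) ^ (a + b) with hK_def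
  have hpt : ∀ x : ℝ, oscillatorEigenfunction m ω a x * oscillatorEigenfunction m ω b x
      = K * ((Hr a).eval (s * x) * (Hr b).eval (s * x) * Real.exp (-((s * x) ^ 2 / 2))) := by
    intro x
    have hexp : Real.exp (-(m * ω * x ^ 2) / 2) * Real.exp (-(m * ω * x ^ 2) / 2)
        = Real.exp (-((s * x) ^ 2 / 2)) := by
      rw [← Real.exp_add]
      congr 1
      rw [hs_def, mul_pow, mul_pow, sq_sqrt (by norm_num : (0:ℝ) ≤ 2),
        hc_def, sq_sqrt hmω.le]
      ring
    rw [oscillatorEigenfunction, oscillatorEigenfunction, hermitePhys_eq, hermitePhys_eq,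
      show Real.sqrt 2 * (c * x) = s * x by rw [hs_def]; ring]
    rw [hK_def, pow_add]
    calc (Real.sqrt (2 ^ a * a.factorial))⁻¹ * (m * ω / π) ^ ((1:ℝ)/4) *
          Real.exp (-(m * ω * x ^ 2) / 2) * ((Real.sqrt 2) ^ a * (Hr a).eval (s * x)) *
          ((Real.sqrt (2 ^ b * b.factorial))⁻¹ * (m * ω / π) ^ ((1:ℝ)/4) *
          Real.exp (-(m * ω * x ^ 2) / 2) * ((Real.sqrt 2) ^ b * (Hr b).eval (s * x)))
        = (Real.sqrt (2 ^ a * a.factorial))⁻¹ * (Real.sqrt (2 ^ b * b.factorial))⁻¹ *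
          ((m * ω / π) ^ ((1:ℝ)/4)) ^ 2 * ((Real.sqrt 2) ^ a * (Real.sqrt 2) ^ b) *
          ((Hr a).eval (s * x) * (Hr b).eval (s * x) *
            (Real.exp (-(m * ω * x ^ 2) / 2) * Real.exp (-(m * ω * x ^ 2) / 2))) := by ring
      _ = _ := by rw [hexp]
  simp_rw [hpt]
  rw [MeasureTheory.integral_const_mul]
  rw [show (fun x : ℝ => (Hr a).eval (s * x) * (Hr b).eval (s * x) *
        Real.exp (-((s * x) ^ 2 / 2)))
      = fun x : ℝ => (fun y : ℝ => (Hr a).eval y * (Hr b).eval y *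
          Real.exp (-(y ^ 2 / 2))) (s * x)
      from rfl]
  rw [MeasureTheory.Measure.integral_comp_mul_left
    (fun y : ℝ => (Hr a).eval y * (Hr b).eval y * Real.exp (-(y ^ 2 / 2))) s]
  rw [hermite_orth a b, smul_eq_mul]
  rcases eq_or_ne a b with rfl | hne
  · rw [if_pos rfl, if_pos rfl]
    have hfac : (0:ℝ) < (a.factorial : ℝ) := by exact_mod_cast a.factorial_pos
    have h1 : (Real.sqrt (2 ^ a * a.factorial))⁻¹ * (Real.sqrt (2 ^ a * a.factorial))⁻¹
        = ((2:ℝ) ^ a * a.factorial)⁻¹ := by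
      rw [← mul_inv, Real.mul_self_sqrt (by positivity)]
    have h2 : ((m * ω / π) ^ ((1:ℝ)/4) : ℝ) ^ 2 = Real.sqrt (m * ω / π) := by
      rw [← Real.rpow_natCast ((m * ω / π) ^ ((1:ℝ)/4)) 2, ← Real.rpow_mul (by positivity)]
      norm_num
      rw [← Real.sqrt_eq_rpow]
    have h3 : (Real.sqrt 2) ^ (a + a) = (2:ℝ) ^ a := by
      rw [← two_mul, pow_mul, Real.sq_sqrt (by norm_num : (0:ℝ) ≤ 2)]
    have h4 : Real.sqrt (m * ω / π) = c / Real.sqrt π := by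
      rw [hc_def, Real.sqrt_div hmω.le]
    have h5 : Real.sqrt (2 * π) = Real.sqrt 2 * Real.sqrt π := Real.sqrt_mul (by norm_num) π
    have habs : |s⁻¹| = (Real.sqrt 2 * c)⁻¹ := by
      rw [abs_of_pos (inv_pos.mpr hs), hs_def]
    rw [hK_def, h1, h2, h3, h4, h5, habs]
    have hπ : (0:ℝ) < Real.sqrt π := Real.sqrt_pos.mpr Real.pi_pos
    have h2' : (0:ℝ) < Real.sqrt 2 := Real.sqrt_pos.mpr (by norm_num)
    have hpa : (0:ℝ) < (2:ℝ)^a := by positivity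
    field_simp
  · rw [if_neg hne, if_neg hne, mul_zero, mul_zero]
end

section
/- Let Σ be a symmetric positive definite d×d matrix, Z_Σ = (d-1)! c_{d-1} (det Σ)^{1/2}, and B a symmetric d×d matrix. Then (1/Z_Σ) ∫_{ℝ^d} exp(-|Σ^{-1/2} r|) (rᵀ B r) dr = (d+1) Tr(Σ^{1/2} B Σ^{1/2}). -/
open MeasureTheory Matrix Real

/-- The positive semidefinite square root of a positive semidefinite matrix (the definition
`Matrix.PosSemidef.sqrt` of the older Mathlib, since removed). -/
noncomputable def Matrix.PosSemidef.sqrt {n : Type*} [Fintype n] [DecidableEq n]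
    {A : Matrix n n ℝ} (hA : A.PosSemidef) : Matrix n n ℝ :=
  hA.1.eigenvectorUnitary.1 * diagonal ((↑) ∘ (√·) ∘ hA.1.eigenvalues) *
  (star hA.1.eigenvectorUnitary : Matrix n n ℝ)

open scoped MatrixOrder in
lemma Matrix.PosSemidef.sqrt_eq_cfc {n : Type*} [Fintype n] [DecidableEq n]
    {A : Matrix n n ℝ} (hA : A.PosSemidef) : hA.sqrt = CFC.sqrt A := by
  rw [CFC.sqrt_eq_real_sqrt A hA.nonneg, cfcₙ_eq_cfc, hA.1.cfc_eq, IsHermitian.cfc,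
    Unitary.conjStarAlgAut_apply]
  rfl

open scoped MatrixOrder in
lemma Matrix.PosSemidef.posSemidef_sqrt {n : Type*} [Fintype n] [DecidableEq n]
    {A : Matrix n n ℝ} (hA : A.PosSemidef) : hA.sqrt.PosSemidef := by
  rw [hA.sqrt_eq_cfc]; exact (CFC.sqrt_nonneg A).posSemidef

open scoped MatrixOrder in
lemma Matrix.PosSemidef.sqrt_mul_self {n : Type*} [Fintype n] [DecidableEq n]
    {A : Matrix n n ℝ} (hA : A.PosSemidef) : hA.sqrt * hA.sqrt = A := by
  rw [hA.sqrt_eq_cfc]; exact CFC.sqrt_mul_sqrt_self A hA.nonneg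

open scoped MatrixOrder in
lemma Matrix.PosSemidef.eq_sqrt_of_sq_eq {n : Type*} [Fintype n] [DecidableEq n]
    {A B : Matrix n n ℝ} (hB : B.PosSemidef) (hA : A.PosSemidef) (h : B ^ 2 = A) :
    B = hA.sqrt := by
  rw [hA.sqrt_eq_cfc]; exact (CFC.sqrt_unique (by rw [← h, sq]) hB.nonneg).symm

variable {d : ℕ}

local notation "E" d => EuclideanSpace ℝ (Fin d)

lemma aux_integrable_exp_neg_norm (d : ℕ) :
    Integrable (fun x : EuclideanSpace ℝ (Fin d) => Real.exp (-‖x‖)) := by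
  by_contra h
  have key := MeasureTheory.measure_unitBall_eq_integral_div_gamma
    (volume : Measure (EuclideanSpace ℝ (Fin d))) one_pos
  simp_rw [Real.rpow_one] at key
  rw [integral_undef h, zero_div, ENNReal.ofReal_zero] at key
  exact (Metric.measure_ball_pos volume (0 : EuclideanSpace ℝ (Fin d)) one_pos).ne' key

lemma aux_integrable_exp_neg_norm_half (d : ℕ) :
    Integrable (fun x : EuclideanSpace ℝ (Fin d) => Real.exp (-(‖x‖ / 2))) := by
  have := (integrable_comp_smul_iff (volume : Measure (EuclideanSpace ℝ (Fin d)))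
    (fun x : EuclideanSpace ℝ (Fin d) => Real.exp (-‖x‖)) (R := (2:ℝ)⁻¹) (by norm_num)).2
    (aux_integrable_exp_neg_norm d)
  simpa [norm_smul, abs_of_pos, inv_mul_eq_div] using this

lemma aux_sq_exp_bound {t : ℝ} (ht : 0 ≤ t) : Real.exp (-t) * t ^ 2 ≤ 16 * Real.exp (-(t/2)) := by
  have h1 : t/4 + 1 ≤ Real.exp (t/4) := Real.add_one_le_exp _
  have h2 : Real.exp (t/4) * Real.exp (t/4) = Real.exp (t/2) := by
    rw [← Real.exp_add]; ring_nf
  have h3 : Real.exp (-t) * Real.exp (t/2) = Real.exp (-(t/2)) := by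
    rw [← Real.exp_add]; ring_nf
  have h4 : t^2 ≤ 16 * Real.exp (t/2) := by nlinarith [Real.exp_pos (t/4)]
  calc Real.exp (-t) * t^2 ≤ Real.exp (-t) * (16 * Real.exp (t/2)) := by
        exact mul_le_mul_of_nonneg_left h4 (Real.exp_pos _).le
    _ = 16 * Real.exp (-(t/2)) := by rw [← h3]; ring

lemma aux_integrable_mul (d : ℕ) (f : EuclideanSpace ℝ (Fin d) → ℝ) (hf : Continuous f)
    (hbd : ∀ x, |f x| ≤ ‖x‖ ^ 2) :
    Integrable (fun x : EuclideanSpace ℝ (Fin d) => Real.exp (-‖x‖) * f x) := by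
  refine Integrable.mono ((aux_integrable_exp_neg_norm_half d).const_mul 16)
    ((Real.continuous_exp.comp continuous_norm.neg).mul hf).aestronglyMeasurable
    (Filter.Eventually.of_forall fun x => ?_)
  have h1 : |Real.exp (-‖x‖) * f x| ≤ Real.exp (-‖x‖) * ‖x‖^2 := by
    rw [abs_mul, abs_of_pos (Real.exp_pos _)]
    exact mul_le_mul_of_nonneg_left (hbd x) (Real.exp_pos _).le
  have h2 := aux_sq_exp_bound (norm_nonneg x)
  simp only [Real.norm_eq_abs]
  rw [abs_of_pos (by positivity : (0:ℝ) < 16 * Real.exp (-(‖x‖/2)))]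
  exact h1.trans h2

lemma aux_coord_le_norm {d : ℕ} (x : EuclideanSpace ℝ (Fin d)) (i : Fin d) : |x i| ≤ ‖x‖ := by
  rw [EuclideanSpace.norm_eq, ← Real.sqrt_sq_eq_abs]
  apply Real.sqrt_le_sqrt
  simpa [Real.norm_eq_abs, sq_abs] using
    Finset.single_le_sum (f := fun j => x j ^ 2) (fun j _ => sq_nonneg _) (Finset.mem_univ i)

lemma aux_normsq {d : ℕ} (x : EuclideanSpace ℝ (Fin d)) : ‖x‖ ^ 2 = ∑ i, x i ^ 2 := by
  rw [EuclideanSpace.norm_eq, Real.sq_sqrt (by positivity)]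
  simp [Real.norm_eq_abs, sq_abs]

/-- negation in coordinate `i` as a linear isometry equiv -/
noncomputable def negCoord {d : ℕ} (i : Fin d) :
    EuclideanSpace ℝ (Fin d) ≃ₗᵢ[ℝ] EuclideanSpace ℝ (Fin d) where
  toLinearEquiv := LinearEquiv.ofInvolutive
    { toFun := fun x => WithLp.toLp 2 (fun j => if j = i then -(x j) else x j : Fin d → ℝ)
      map_add' := by
        intro x y; ext j
        by_cases h : j = i <;> simp [h, WithLp.equiv] <;> ring
      map_smul' := by
        intro c x; ext j
        by_cases h : j = i <;> simp [h] <;> ring }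
    (by intro x; ext j; by_cases h : j = i <;> simp [h])
  norm_map' := by
    intro x
    rw [EuclideanSpace.norm_eq, EuclideanSpace.norm_eq]
    congr 1
    apply Finset.sum_congr rfl
    intro j _
    show ‖if j = i then -(x j) else x j‖ ^ 2 = ‖x j‖ ^ 2
    by_cases h : j = i <;> simp [h]

lemma negCoord_apply {d : ℕ} (i : Fin d) (x : EuclideanSpace ℝ (Fin d)) (j : Fin d) :
    negCoord i x j = if j = i then -(x j) else x j := rfl

lemma aux_integral_comp_li {d : ℕ} (e : EuclideanSpace ℝ (Fin d) ≃ₗᵢ[ℝ] EuclideanSpace ℝ (Fin d))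
    (g : EuclideanSpace ℝ (Fin d) → ℝ) :
    ∫ x, g (e x) = ∫ x, g x :=
  (e.measurePreserving).integral_comp e.toHomeomorph.measurableEmbedding g

lemma aux_moment_offdiag {d : ℕ} (i j : Fin d) (hij : i ≠ j) :
    ∫ x : EuclideanSpace ℝ (Fin d), Real.exp (-‖x‖) * (x i * x j) = 0 := by
  have key := aux_integral_comp_li (negCoord i)
    (fun x : EuclideanSpace ℝ (Fin d) => Real.exp (-‖x‖) * (x i * x j))
  have h2 : ∀ x : EuclideanSpace ℝ (Fin d),
      Real.exp (-‖negCoord i x‖) * (negCoord i x i * negCoord i x j)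
        = -(Real.exp (-‖x‖) * (x i * x j)) := by
    intro x
    rw [(negCoord i).norm_map, negCoord_apply, negCoord_apply]
    simp only [eq_self_iff_true, if_true, if_neg hij.symm]
    ring
  simp_rw [h2] at key
  rw [integral_neg] at key
  linarith [key]

lemma aux_moment_diag_eq {d : ℕ} (i j : Fin d) :
    ∫ x : EuclideanSpace ℝ (Fin d), Real.exp (-‖x‖) * (x i * x i)
      = ∫ x : EuclideanSpace ℝ (Fin d), Real.exp (-‖x‖) * (x j * x j) := by
  have key := aux_integral_comp_li
    (LinearIsometryEquiv.piLpCongrLeft 2 ℝ ℝ (Equiv.swap i j))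
    (fun x : EuclideanSpace ℝ (Fin d) => Real.exp (-‖x‖) * (x i * x i))
  have h2 : ∀ x : EuclideanSpace ℝ (Fin d),
      (LinearIsometryEquiv.piLpCongrLeft 2 ℝ ℝ (Equiv.swap i j) x) i = x j := by
    intro x
    rw [LinearIsometryEquiv.piLpCongrLeft_apply]
    simp only [Equiv.piCongrLeft'_apply]
    rw [Equiv.symm_swap, Equiv.swap_apply_left]
  rw [← key]
  congr 1
  funext x
  rw [h2, (LinearIsometryEquiv.piLpCongrLeft 2 ℝ ℝ (Equiv.swap i j)).norm_map]

-- Gamma integral: ∫ y in Ioi 0, exp (-y) * y ^ (n : ℕ) = n !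
lemma aux_gamma_int (n : ℕ) :
    ∫ y in Set.Ioi (0:ℝ), Real.exp (-y) * y ^ n = n.factorial := by
  have h := Real.Gamma_eq_integral (s := (n:ℝ) + 1) (by positivity)
  rw [Real.Gamma_nat_eq_factorial] at h
  rw [h]
  apply setIntegral_congr_fun measurableSet_Ioi
  intro y hy
  have h1 : ((n:ℝ) + 1 - 1) = ((n:ℕ):ℝ) := by ring
  simp only [h1, Real.rpow_natCast]

lemma aux_radial (d : ℕ) (hd : 0 < d) :
    ∫ x : EuclideanSpace ℝ (Fin d), Real.exp (-‖x‖) * ‖x‖ ^ 2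
      = d * (volume (Metric.ball (0 : EuclideanSpace ℝ (Fin d)) 1)).toReal
          * (d + 1).factorial := by
  haveI : Nonempty (Fin d) := ⟨⟨0, hd⟩⟩
  haveI : Nontrivial (EuclideanSpace ℝ (Fin d)) :=
    Module.nontrivial_of_finrank_pos (R := ℝ) (by rw [finrank_euclideanSpace_fin]; exact hd)
  have key := integral_fun_norm_addHaar (volume : Measure (EuclideanSpace ℝ (Fin d)))
    (fun y => Real.exp (-y) * y ^ 2)
  rw [key, finrank_euclideanSpace_fin]
  have h2 : ∫ y in Set.Ioi (0:ℝ), y ^ (d - 1) • (Real.exp (-y) * y ^ 2)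
      = ∫ y in Set.Ioi (0:ℝ), Real.exp (-y) * y ^ (d + 1) := by
    apply integral_congr_ae
    apply Filter.Eventually.of_forall
    intro y
    simp only [smul_eq_mul]
    have h1 : d - 1 + 2 = d + 1 := by omega
    rw [← h1, pow_add]
    ring
  rw [h2, aux_gamma_int (d + 1)]
  rw [nsmul_eq_mul, smul_eq_mul]
  rw [measureReal_def]
  ring

lemma aux_ball_vol (d : ℕ) (hd : 0 < d) :
    (volume (Metric.ball (0 : EuclideanSpace ℝ (Fin d)) 1)).toReal
      = Real.sqrt π ^ d / Real.Gamma ((d:ℝ) / 2 + 1) := by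
  haveI : Nonempty (Fin d) := ⟨⟨0, hd⟩⟩
  rw [EuclideanSpace.volume_ball]
  have hΓ : 0 < Real.Gamma ((d:ℝ) / 2 + 1) := Real.Gamma_pos_of_pos (by positivity)
  rw [Fintype.card_fin]
  rw [ENNReal.ofReal_one, one_pow, one_mul, ENNReal.toReal_ofReal (by positivity)]

lemma aux_psd_det_nonneg {d : ℕ} {A : Matrix (Fin d) (Fin d) ℝ} (hA : A.PosSemidef) :
    0 ≤ A.det := by
  rw [hA.1.det_eq_prod_eigenvalues]
  exact Finset.prod_nonneg fun i _ => hA.eigenvalues_nonneg i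

lemma aux_cov {d : ℕ} (T : Matrix (Fin d) (Fin d) ℝ) (hT : T.det ≠ 0)
    (g : EuclideanSpace ℝ (Fin d) → ℝ) :
    ∫ x : EuclideanSpace ℝ (Fin d), g x
      = |T.det| * ∫ x : EuclideanSpace ℝ (Fin d), g (Matrix.toEuclideanLin T x) := by
  have hTunit : IsUnit T.det := isUnit_iff_ne_zero.2 hT
  have h1 : (Matrix.toEuclideanLin T) ∘ₗ (Matrix.toEuclideanLin T⁻¹) = LinearMap.id := by
    apply LinearMap.ext
    intro x
    show Matrix.toEuclideanLin T (Matrix.toEuclideanLin T⁻¹ x) = x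
    simp only [Matrix.toEuclideanLin_apply, Equiv.apply_symm_apply, Matrix.mulVec_mulVec,
      Matrix.mul_nonsing_inv T hTunit, Matrix.one_mulVec, Equiv.symm_apply_apply]
  have h2 : (Matrix.toEuclideanLin T⁻¹) ∘ₗ (Matrix.toEuclideanLin T) = LinearMap.id := by
    apply LinearMap.ext
    intro x
    show Matrix.toEuclideanLin T⁻¹ (Matrix.toEuclideanLin T x) = x
    simp only [Matrix.toEuclideanLin_apply, Equiv.apply_symm_apply, Matrix.mulVec_mulVec,
      Matrix.nonsing_inv_mul T hTunit, Matrix.one_mulVec, Equiv.symm_apply_apply]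
  let L : EuclideanSpace ℝ (Fin d) ≃ₗ[ℝ] EuclideanSpace ℝ (Fin d) :=
    LinearEquiv.ofLinear (Matrix.toEuclideanLin T) (Matrix.toEuclideanLin T⁻¹) h1 h2
  have hdetL : LinearMap.det (L : EuclideanSpace ℝ (Fin d) →ₗ[ℝ] EuclideanSpace ℝ (Fin d))
      = T.det := by
    have heq : (L : EuclideanSpace ℝ (Fin d) →ₗ[ℝ] EuclideanSpace ℝ (Fin d))
        = ↑(WithLp.linearEquiv 2 ℝ (Fin d → ℝ)).symm ∘ₗ (Matrix.toLin' T) ∘ₗ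
            ↑((WithLp.linearEquiv 2 ℝ (Fin d → ℝ)).symm).symm := rfl
    rw [heq, LinearMap.det_conj (Matrix.toLin' T) (WithLp.linearEquiv 2 ℝ (Fin d → ℝ)).symm,
      LinearMap.det_toLin']
  have hdetL0 : LinearMap.det (L : EuclideanSpace ℝ (Fin d) →ₗ[ℝ] EuclideanSpace ℝ (Fin d)) ≠ 0 := by
    rw [hdetL]; exact hT
  have hmap := Measure.map_linearMap_addHaar_eq_smul_addHaar
    (volume : Measure (EuclideanSpace ℝ (Fin d))) hdetL0
  let e : EuclideanSpace ℝ (Fin d) ≃ᵐ EuclideanSpace ℝ (Fin d) :=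
    (L.toContinuousLinearEquiv).toHomeomorph.toMeasurableEquiv
  have hcoe : (⇑(L : EuclideanSpace ℝ (Fin d) →ₗ[ℝ] EuclideanSpace ℝ (Fin d))
      : EuclideanSpace ℝ (Fin d) → EuclideanSpace ℝ (Fin d)) = ⇑e := rfl
  have key : ∫ x : EuclideanSpace ℝ (Fin d), g (Matrix.toEuclideanLin T x)
      = |T.det⁻¹| * ∫ x : EuclideanSpace ℝ (Fin d), g x := by
    have h3 : ∀ x, g (Matrix.toEuclideanLin T x) = g (e x) := fun x => rfl
    simp_rw [h3]
    rw [← MeasureTheory.integral_map_equiv e g]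
    rw [show Measure.map (⇑e) volume = Measure.map
        (⇑(L : EuclideanSpace ℝ (Fin d) →ₗ[ℝ] EuclideanSpace ℝ (Fin d))) volume from rfl]
    rw [hmap, hdetL]
    rw [integral_smul_measure, ENNReal.toReal_ofReal (abs_nonneg _), smul_eq_mul]
  rw [key, ← mul_assoc, abs_inv, mul_inv_cancel₀ (by simpa using hT), one_mul]
-- moments continued
lemma aux_integrable_coord {d : ℕ} (i j : Fin d) :
    Integrable (fun x : EuclideanSpace ℝ (Fin d) => Real.exp (-‖x‖) * (x i * x j)) := by
  apply aux_integrable_mul d (fun x => x i * x j)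
  · exact ((continuous_apply i).comp (PiLp.continuous_ofLp 2 (fun _ : Fin d => ℝ))).mul
      ((continuous_apply j).comp (PiLp.continuous_ofLp 2 (fun _ : Fin d => ℝ)))
  · intro x
    rw [abs_mul, aux_normsq x]
    calc |x i| * |x j| ≤ ‖x‖ * ‖x‖ :=
          mul_le_mul (aux_coord_le_norm x i) (aux_coord_le_norm x j) (abs_nonneg _) (norm_nonneg _)
      _ = ∑ k, x k ^ 2 := by rw [← sq, aux_normsq x]

lemma aux_moment_diag {d : ℕ} (hd : 0 < d) (i : Fin d) :
    ∫ x : EuclideanSpace ℝ (Fin d), Real.exp (-‖x‖) * (x i * x i)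
      = (volume (Metric.ball (0 : EuclideanSpace ℝ (Fin d)) 1)).toReal * (d + 1).factorial := by
  set V := (volume (Metric.ball (0 : EuclideanSpace ℝ (Fin d)) 1)).toReal with hV
  have hsum : ∑ j : Fin d, ∫ x : EuclideanSpace ℝ (Fin d), Real.exp (-‖x‖) * (x j * x j)
      = d * V * (d + 1).factorial := by
    rw [← integral_finset_sum _ (fun j _ => aux_integrable_coord j j)]
    rw [← aux_radial d hd]
    congr 1
    funext x
    rw [aux_normsq x, Finset.mul_sum]
    exact Finset.sum_congr rfl fun j _ => by ring
  have hall : ∀ j : Fin d, (∫ x : EuclideanSpace ℝ (Fin d), Real.exp (-‖x‖) * (x j * x j))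
      = ∫ x : EuclideanSpace ℝ (Fin d), Real.exp (-‖x‖) * (x i * x i) :=
    fun j => aux_moment_diag_eq j i
  rw [Finset.sum_congr rfl (fun j _ => hall j), Finset.sum_const, Finset.card_univ,
    Fintype.card_fin, nsmul_eq_mul] at hsum
  have hd' : (d : ℝ) ≠ 0 := Nat.cast_ne_zero.2 hd.ne'
  refine mul_left_cancel₀ hd' ?_
  rw [hsum]
  ring

lemma aux_quad {d : ℕ} (hd : 0 < d) (A : Matrix (Fin d) (Fin d) ℝ) :
    ∫ x : EuclideanSpace ℝ (Fin d), Real.exp (-‖x‖) * dotProduct (x : Fin d → ℝ) (A.mulVec x)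
      = A.trace * ((volume (Metric.ball (0 : EuclideanSpace ℝ (Fin d)) 1)).toReal
          * (d + 1).factorial) := by
  set V := (volume (Metric.ball (0 : EuclideanSpace ℝ (Fin d)) 1)).toReal with hV
  have hpt : ∀ x : EuclideanSpace ℝ (Fin d),
      Real.exp (-‖x‖) * dotProduct (x : Fin d → ℝ) (A.mulVec x)
        = ∑ i, ∑ j, A i j * (Real.exp (-‖x‖) * (x i * x j)) := by
    intro x
    simp only [dotProduct, Matrix.mulVec, Finset.mul_sum]
    exact Finset.sum_congr rfl fun i _ => Finset.sum_congr rfl fun j _ => by ring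
  simp_rw [hpt]
  rw [integral_finset_sum _ (fun i _ => integrable_finset_sum _
    (fun j _ => (aux_integrable_coord i j).const_mul (A i j)))]
  have : ∀ i : Fin d, (∫ x : EuclideanSpace ℝ (Fin d),
      ∑ j, A i j * (Real.exp (-‖x‖) * (x i * x j))) = A i i * (V * (d + 1).factorial) := by
    intro i
    rw [integral_finset_sum _ (fun j _ => (aux_integrable_coord i j).const_mul (A i j))]
    rw [Finset.sum_eq_single i]
    · rw [integral_const_mul, aux_moment_diag hd i]
    · intro j _ hji
      rw [integral_const_mul, aux_moment_offdiag i j (Ne.symm hji), mul_zero]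
    · intro h; exact absurd (Finset.mem_univ i) h
  rw [Finset.sum_congr rfl (fun i _ => this i), ← Finset.sum_mul]
  rfl
-- matrix facts
lemma aux_sqrt_inv {d : ℕ} {S : Matrix (Fin d) (Fin d) ℝ} (hS : S.PosDef) :
    hS.inv.posSemidef.sqrt = (hS.posSemidef.sqrt)⁻¹ := by
  symm
  apply Matrix.PosSemidef.eq_sqrt_of_sq_eq (hS.posSemidef.posSemidef_sqrt.inv)
  rw [sq, ← Matrix.mul_inv_rev, hS.posSemidef.sqrt_mul_self]

lemma aux_sqrt_det {d : ℕ} {S : Matrix (Fin d) (Fin d) ℝ} (hS : S.PosDef) :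
    (hS.posSemidef.sqrt).det = Real.sqrt S.det := by
  have h1 : (hS.posSemidef.sqrt).det * (hS.posSemidef.sqrt).det = S.det := by
    rw [← Matrix.det_mul, hS.posSemidef.sqrt_mul_self]
  rw [← h1, Real.sqrt_mul_self (aux_psd_det_nonneg hS.posSemidef.posSemidef_sqrt)]

lemma aux_sqrt_det_pos {d : ℕ} {S : Matrix (Fin d) (Fin d) ℝ} (hS : S.PosDef) :
    0 < (hS.posSemidef.sqrt).det := by
  rw [aux_sqrt_det hS]
  exact Real.sqrt_pos.2 hS.det_pos

lemma aux_sqrt_transpose {d : ℕ} {S : Matrix (Fin d) (Fin d) ℝ} (hS : S.PosDef) :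
    (hS.posSemidef.sqrt)ᵀ = hS.posSemidef.sqrt := by
  have h := hS.posSemidef.posSemidef_sqrt.1
  simpa [Matrix.IsHermitian, Matrix.conjTranspose_eq_transpose_of_trivial] using h

-- constant identity
lemma aux_const (d : ℕ) (hd : 0 < d) :
    (Real.sqrt π ^ d / Real.Gamma ((d:ℝ) / 2 + 1)) * (d + 1).factorial
      = (d + 1) * ((d - 1).factorial * (2 * π ^ ((d:ℝ) / 2) / Real.Gamma ((d:ℝ) / 2))) := by
  have hπ : Real.sqrt π ^ d = π ^ ((d:ℝ) / 2) := by
    rw [Real.sqrt_eq_rpow, ← Real.rpow_natCast (π ^ ((1:ℝ)/2)) d, ← Real.rpow_mul Real.pi_pos.le]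
    congr 1
    ring
  have hΓ1 : Real.Gamma ((d:ℝ) / 2 + 1) = ((d:ℝ) / 2) * Real.Gamma ((d:ℝ) / 2) :=
    Real.Gamma_add_one (by positivity)
  have hΓpos : 0 < Real.Gamma ((d:ℝ) / 2) := Real.Gamma_pos_of_pos (by positivity)
  have hfact : ((d + 1).factorial : ℝ) = (d + 1) * d * (d - 1).factorial := by
    rw [Nat.factorial_succ]
    rw [← Nat.mul_factorial_pred hd.ne']
    push_cast
    ring
  rw [hπ, hΓ1, hfact]
  have hd' : (0:ℝ) < (d:ℝ) := Nat.cast_pos.2 hd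
  field_simp
theorem laplace_kernel_second_moment (d : ℕ) (hd : 0 < d)
    (S B : Matrix (Fin d) (Fin d) ℝ) (hS : S.PosDef) (hB : B.IsSymm) :
    (1 / ((d - 1).factorial * (2 * Real.pi ^ ((d : ℝ) / 2) / Real.Gamma ((d : ℝ) / 2)) *
        Real.sqrt S.det)) *
      ∫ r : EuclideanSpace ℝ (Fin d),
        Real.exp (-Real.sqrt (∑ i, ((hS.inv.posSemidef.sqrt).mulVec r i) ^ 2)) *
          dotProduct r (B.mulVec r)
      = (d + 1) * (hS.posSemidef.sqrt * B * hS.posSemidef.sqrt).trace := by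
  set T := hS.posSemidef.sqrt with hT
  have hTdetpos : 0 < T.det := aux_sqrt_det_pos hS
  have hTdet0 : T.det ≠ 0 := hTdetpos.ne'
  set F : EuclideanSpace ℝ (Fin d) → ℝ := fun r =>
    Real.exp (-Real.sqrt (∑ i, ((hS.inv.posSemidef.sqrt).mulVec r i) ^ 2)) *
      dotProduct r (B.mulVec r) with hF
  have hpt : ∀ x : EuclideanSpace ℝ (Fin d), F (Matrix.toEuclideanLin T x)
      = Real.exp (-‖x‖) * dotProduct (x : Fin d → ℝ) ((T * B * T).mulVec x) := by
    intro x
    have hx : ((Matrix.toEuclideanLin T x : EuclideanSpace ℝ (Fin d)) : Fin d → ℝ)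
        = T.mulVec x := rfl
    have hQ : (hS.inv.posSemidef.sqrt).mulVec (T.mulVec x) = (x : Fin d → ℝ) := by
      rw [aux_sqrt_inv hS, Matrix.mulVec_mulVec,
        Matrix.nonsing_inv_mul T (isUnit_iff_ne_zero.2 hTdet0), Matrix.one_mulVec]
    have hnorm : Real.sqrt (∑ i, (x : Fin d → ℝ) i ^ 2) = ‖x‖ := by
      rw [EuclideanSpace.norm_eq]
      congr 1
      exact Finset.sum_congr rfl fun i _ => by rw [Real.norm_eq_abs, sq_abs]
    have hTt : Tᵀ = T := aux_sqrt_transpose hS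
    have hTvec : T.mulVec (x : Fin d → ℝ) = Matrix.vecMul x T := by
      conv_lhs => rw [← hTt]
      exact Matrix.mulVec_transpose T x
    have hdot : dotProduct (T.mulVec x) (B.mulVec (T.mulVec x))
        = dotProduct (x : Fin d → ℝ) ((T * B * T).mulVec x) := by
      rw [Matrix.mulVec_mulVec]
      rw [hTvec]
      rw [Matrix.dotProduct_mulVec, Matrix.vecMul_vecMul]
      rw [Matrix.dotProduct_mulVec]
      rw [← mul_assoc]
    show Real.exp (-Real.sqrt (∑ i, ((hS.inv.posSemidef.sqrt).mulVec (T.mulVec x)) i ^ 2)) *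
        dotProduct (T.mulVec x) (B.mulVec (T.mulVec x))
      = Real.exp (-‖x‖) * dotProduct (x : Fin d → ℝ) ((T * B * T).mulVec x)
    rw [hQ, hnorm, hdot]
  have hcov := aux_cov T hTdet0 F
  rw [hcov]
  have hIq : (∫ x : EuclideanSpace ℝ (Fin d), F (Matrix.toEuclideanLin T x))
      = (T * B * T).trace
          * ((volume (Metric.ball (0 : EuclideanSpace ℝ (Fin d)) 1)).toReal
            * (d + 1).factorial) := by
    simp_rw [hpt]
    exact aux_quad hd (T * B * T)
  rw [hIq, abs_of_pos hTdetpos, aux_sqrt_det hS, aux_ball_vol d hd]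
  have hkey := aux_const d hd
  set c : ℝ := 2 * π ^ ((d : ℝ) / 2) / Real.Gamma ((d : ℝ) / 2) with hc
  set W : ℝ := Real.sqrt π ^ d / Real.Gamma ((d:ℝ) / 2 + 1) with hW
  have hΓpos : 0 < Real.Gamma ((d:ℝ) / 2) := Real.Gamma_pos_of_pos (by positivity)
  have hcpos : 0 < c := by
    rw [hc]
    have : (0:ℝ) < π ^ ((d : ℝ) / 2) := Real.rpow_pos_of_pos Real.pi_pos _
    positivity
  have hfac0 : ((d-1).factorial : ℝ) ≠ 0 := Nat.cast_ne_zero.2 (Nat.factorial_ne_zero _)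
  have hs0 : Real.sqrt S.det ≠ 0 := (Real.sqrt_pos.2 hS.det_pos).ne'
  -- goal: (1 / (↑(d-1)! * c * √S.det)) * (√S.det * ((T*B*T).trace * (W * ↑(d+1)!)))
  --        = (↑d + 1) * (T*B*T).trace
  have hWf : W * ((d+1).factorial : ℝ) = ((d:ℝ) + 1) * ((d - 1).factorial * c) := by
    rw [hW, hc]
    exact_mod_cast hkey
  rw [mul_comm (Real.sqrt S.det), mul_assoc, hWf]
  field_simp
end
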